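/- Let P_n and P'_n be finite positive combinations of monomials of the form m_n = C (1−λ_n)^b λ_n^a ∏_{(ω,i)} x_n^i(ω)^{A(ω,i)} with C > 0, a,b ∈ {0,…,|Ω|}, A ∈ {0,1}^{Ω×I}, where (λ_n, x_n) is a regular sequence such that for any two such monomials m_n, m'_n the ratio m_n/m'_n converges in [0,+∞]. If P'_n > 0 for all n and some monomial of P'_n is maximal among all monomials appearing in P_n and P'_n (with respect to the order m ⪯ m' iff lim m_n/m'_n < ∞), then lim_n P_n/P'_n exists in [0,+∞) and depends only on the coefficients C and the limit vector L of the regular sequence. -/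

import Mathlib

open Filter Topology Finset
open scoped ENNReal

/-- The monomial `λ^a ∏_{(ω,i)} x^i(ω)^{A(ω,i)}`, evaluated in `[0,+∞]` with the
conventions `0^0 = 1`, `0^β = 0` and `0^{-β} = +∞` for `β > 0`. -/
noncomputable def monoVal {Ω I : Type*} [Fintype Ω] [Fintype I]
    (lam : ℝ) (x : Ω → I → ℝ) (A : Ω × I → ℤ) (a : ℤ) : ℝ≥0∞ :=
  (ENNReal.ofReal lam) ^ a * ∏ p : Ω × I, (ENNReal.ofReal (x p.1 p.2)) ^ (A p)

/-- Membership of `(A,a)` in the index set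
`M = { (A,a) | A ∈ {-1,0,1}^{Ω×I}, |a| ≤ |Ω| }`. -/
def memM (Ω I : Type*) [Fintype Ω] [Fintype I] (A : Ω × I → ℤ) (a : ℤ) : Prop :=
  (∀ p, A p = -1 ∨ A p = 0 ∨ A p = 1) ∧ a.natAbs ≤ Fintype.card Ω

/-- A sequence `(λ_n, x_n)` of discount factors and stationary strategies is regular if
`λ_n → 0` and for every `(A,a) ∈ M` the limit `L(A,a) = lim_n λ_n^a ∏ x_n^i(ω)^{A(ω,i)}`
exists in `[0,+∞]`. -/
def IsRegularSeq {Ω I : Type*} [Fintype Ω] [Fintype I]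
    (lam : ℕ → ℝ) (x : ℕ → Ω → I → ℝ) : Prop :=
  Tendsto lam atTop (𝓝 0) ∧
  ∀ A a, memM Ω I A a →
    ∃ l : ℝ≥0∞, Tendsto (fun n => monoVal (lam n) (x n) A a) atTop (𝓝 l)

/-- The real-valued monomial `C (1-λ)^b λ^a ∏_{(ω,i)} x^i(ω)^{A(ω,i)}`. -/
noncomputable def rmono {Ω I : Type*} [Fintype Ω] [Fintype I]
    (lam : ℝ) (x : Ω → I → ℝ) (C : ℝ) (b a : ℕ) (A : Ω × I → ℕ) : ℝ :=
  C * (1 - lam) ^ b * lam ^ a * ∏ p : Ω × I, (x p.1 p.2) ^ (A p)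

section aux
variable {Ω I : Type*} [Fintype Ω] [Fintype I]

lemma natMono_ne_top (lam : ℝ) (x : Ω → I → ℝ) (A : Ω × I → ℕ) (a : ℕ) :
    monoVal lam x (fun p => (A p : ℤ)) (a : ℤ) ≠ ⊤ := by
  unfold monoVal
  apply ENNReal.mul_ne_top
  · rw [zpow_natCast]; exact ENNReal.pow_ne_top ENNReal.ofReal_ne_top
  · refine (ENNReal.prod_lt_top ?_).ne
    intro p _
    rw [zpow_natCast]
    exact ENNReal.pow_lt_top ENNReal.ofReal_lt_top

lemma key_factor (lam : ℝ) (x : Ω → I → ℝ) (h0 : 0 < lam) (h1 : lam ≤ 1)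
    (hx : ∀ ω i, 0 ≤ x ω i) (C : ℝ) (hC : 0 ≤ C) (b aN : ℕ) (AN : Ω × I → ℕ)
    (hAN : ∀ p, AN p ≤ 1) (a0 : ℕ) (A0 : Ω × I → ℕ) (hA0 : ∀ p, A0 p ≤ 1)
    (hfin : monoVal lam x (fun p => (AN p : ℤ) - (A0 p : ℤ)) ((aN : ℤ) - (a0 : ℤ)) ≠ ⊤) :
    ENNReal.ofReal (rmono lam x C b aN AN)
      = ENNReal.ofReal (C * (1 - lam) ^ b) *
        (monoVal lam x (fun p => (AN p : ℤ) - (A0 p : ℤ)) ((aN : ℤ) - (a0 : ℤ)) *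
         monoVal lam x (fun p => (A0 p : ℤ)) (a0 : ℤ)) := by
  classical
  unfold monoVal at hfin
  set X : Ω × I → ℝ≥0∞ := fun p => ENNReal.ofReal (x p.1 p.2) with hX
  have hXt : ∀ p, X p ≠ ⊤ := fun p => ENNReal.ofReal_ne_top
  have hΛ0 : ENNReal.ofReal lam ≠ 0 := (ENNReal.ofReal_pos.mpr h0).ne'
  have hΛt : ENNReal.ofReal lam ≠ ⊤ := ENNReal.ofReal_ne_top
  have hCb : 0 ≤ C * (1 - lam) ^ b := mul_nonneg hC (pow_nonneg (by linarith) _)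
  have hLHS : ENNReal.ofReal (rmono lam x C b aN AN)
      = ENNReal.ofReal (C * (1 - lam) ^ b) *
        ((ENNReal.ofReal lam) ^ (aN : ℤ) * ∏ p : Ω × I, X p ^ ((AN p : ℤ))) := by
    unfold rmono
    rw [ENNReal.ofReal_mul (mul_nonneg hCb (pow_nonneg h0.le _)), ENNReal.ofReal_mul hCb,
      mul_assoc]
    congr 1
    congr 1
    · rw [ENNReal.ofReal_pow h0.le, zpow_natCast]
    · rw [ENNReal.ofReal_prod_of_nonneg (fun p _ => pow_nonneg (hx p.1 p.2) _)]
      refine Finset.prod_congr rfl fun p _ => ?_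
      rw [ENNReal.ofReal_pow (hx p.1 p.2), zpow_natCast]
      
  rw [hLHS]
  unfold monoVal
  by_cases hbad : ∃ p, X p = 0 ∧ (AN p : ℤ) - (A0 p : ℤ) < 0
  · -- some factor of the difference monomial is ⊤; since the whole product is finite,
    -- it must be 0, hence some AN p1 = 1 with x p1 = 0, making everything 0.
    obtain ⟨p0, hX0, hlt⟩ := hbad
    have hP : (∏ p : Ω × I, X p ^ ((AN p : ℤ) - (A0 p : ℤ))) ≠ ⊤ := by
      intro h
      apply hfin
      rw [h, ENNReal.mul_eq_top]
      exact Or.inl ⟨(ENNReal.zpow_pos hΛ0 hΛt _).ne', rfl⟩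
    have hP0 : (∏ p : Ω × I, X p ^ ((AN p : ℤ) - (A0 p : ℤ))) = 0 := by
      by_contra h
      apply hP
      have hmem : p0 ∈ (Finset.univ : Finset (Ω × I)) := Finset.mem_univ _
      rw [← Finset.mul_prod_erase _ _ hmem]
      have htop : X p0 ^ ((AN p0 : ℤ) - (A0 p0 : ℤ)) = ⊤ := by
        have hAN0 : AN p0 = 0 := by have := hAN p0; have := hA0 p0; have := hlt; omega
        have hA01 : A0 p0 = 1 := by have := hAN p0; have := hA0 p0; have := hlt; omega
        rw [hX0, hAN0, hA01]
        norm_num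
        rw [zpow_neg_one]
        simp
      rw [htop, ENNReal.top_mul]
      intro hrest
      apply h
      rw [← Finset.mul_prod_erase _ _ hmem, hrest, mul_zero]
    obtain ⟨p1, _, h1'⟩ := Finset.prod_eq_zero_iff.mp hP0
    have hX1 : X p1 = 0 := by
      by_contra hx1
      exact (ENNReal.zpow_pos hx1 (hXt p1) _).ne' h1'
    have hAN1 : AN p1 = 1 := by
      rw [hX1] at h1'
      have hh := hAN p1
      have hh' := hA0 p1
      interval_cases hv : AN p1 <;> interval_cases hv' : A0 p1 <;>
        simp_all [zpow_neg_one]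
    have hzN : (∏ p : Ω × I, X p ^ ((AN p : ℤ))) = 0 :=
      Finset.prod_eq_zero (Finset.mem_univ p1) (by rw [hX1, hAN1]; norm_num)
    rw [hzN, hP0]
    simp
  · push_neg at hbad
    have hfac : ∀ p : Ω × I,
        X p ^ ((AN p : ℤ) - (A0 p : ℤ)) * X p ^ ((A0 p : ℤ)) = X p ^ ((AN p : ℤ)) := by
      intro p
      by_cases hz : X p = 0
      · have hnneg := hbad p hz
        have hAN' := hAN p
        have hA0' := hA0 p
        interval_cases h1 : AN p <;> interval_cases h2 : A0 p <;>
          simp_all [hz]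
      · rw [← ENNReal.zpow_add hz (hXt p), sub_add_cancel]
    congr 1
    rw [mul_mul_mul_comm, ← ENNReal.zpow_add hΛ0 hΛt, sub_add_cancel,
      ← Finset.prod_mul_distrib]
    exact congrArg _ (Finset.prod_congr rfl fun p _ => hfac p).symm

lemma rmono_nonneg (lam : ℝ) (x : Ω → I → ℝ) (h0 : 0 ≤ lam) (h1 : lam ≤ 1)
    (hx : ∀ ω i, 0 ≤ x ω i) (C : ℝ) (hC : 0 ≤ C) (b a : ℕ) (A : Ω × I → ℕ) :
    0 ≤ rmono lam x C b a A := by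
  unfold rmono
  have : (0:ℝ) ≤ 1 - lam := by linarith
  refine mul_nonneg (mul_nonneg (mul_nonneg hC (pow_nonneg this _)) (pow_nonneg h0 _)) ?_
  exact Finset.prod_nonneg fun p _ => pow_nonneg (hx p.1 p.2) _

lemma ratio_aux {κ κ' : Type*} [Fintype κ] [Fintype κ']
    (lam : ℕ → ℝ) (x : ℕ → Ω → I → ℝ)
    (hlam : ∀ n, lam n ∈ Set.Ioc (0:ℝ) 1)
    (hlam0 : Tendsto lam atTop (𝓝 0))
    (hx : ∀ n ω i, 0 ≤ x n ω i)
    (L : (Ω × I → ℤ) → ℤ → ℝ≥0∞)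
    (hL : ∀ A a, memM Ω I A a →
      Tendsto (fun n => monoVal (lam n) (x n) A a) atTop (𝓝 (L A a)))
    (C : κ → ℝ) (b a : κ → ℕ) (A : κ → Ω × I → ℕ)
    (C' : κ' → ℝ) (b' a' : κ' → ℕ) (A' : κ' → Ω × I → ℕ)
    (hC : ∀ k, 0 < C k) (ha : ∀ k, a k ≤ Fintype.card Ω) (hA : ∀ k p, A k p ≤ 1)
    (hC' : ∀ k, 0 < C' k) (ha' : ∀ k, a' k ≤ Fintype.card Ω) (hA' : ∀ k p, A' k p ≤ 1)
    (hpos : ∀ n, 0 < ∑ k, rmono (lam n) (x n) (C' k) (b' k) (a' k) (A' k))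
    (k₀ : κ')
    (hmax : ∀ k, L (fun p => (A k p:ℤ) - (A' k₀ p:ℤ)) ((a k:ℤ) - (a' k₀:ℤ)) ≠ ⊤)
    (hmax' : ∀ k, L (fun p => (A' k p:ℤ) - (A' k₀ p:ℤ)) ((a' k:ℤ) - (a' k₀:ℤ)) ≠ ⊤) :
    Tendsto (fun n => (∑ k, rmono (lam n) (x n) (C k) (b k) (a k) (A k)) /
        (∑ k, rmono (lam n) (x n) (C' k) (b' k) (a' k) (A' k))) atTop
      (𝓝 (((∑ k, ENNReal.ofReal (C k) *
              L (fun p => (A k p:ℤ) - (A' k₀ p:ℤ)) ((a k:ℤ) - (a' k₀:ℤ))) /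
           (∑ k, ENNReal.ofReal (C' k) *
              L (fun p => (A' k p:ℤ) - (A' k₀ p:ℤ)) ((a' k:ℤ) - (a' k₀:ℤ)))).toReal)) := by
  classical
  have hmemM : ∀ (B : Ω × I → ℕ) (c : ℕ), (∀ p, B p ≤ 1) → c ≤ Fintype.card Ω →
      memM Ω I (fun p => (B p:ℤ) - (A' k₀ p:ℤ)) ((c:ℤ) - (a' k₀:ℤ)) := by
    intro B c hB hc
    constructor
    · intro p
      have := hB p
      have := hA' k₀ p
      dsimp only
      omega
    · have := ha' k₀
      omega
  set Dk : κ → ℕ → ℝ≥0∞ := fun k n =>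
    monoVal (lam n) (x n) (fun p => (A k p:ℤ) - (A' k₀ p:ℤ)) ((a k:ℤ) - (a' k₀:ℤ)) with hDkdef
  set Dk' : κ' → ℕ → ℝ≥0∞ := fun k n =>
    monoVal (lam n) (x n) (fun p => (A' k p:ℤ) - (A' k₀ p:ℤ)) ((a' k:ℤ) - (a' k₀:ℤ)) with hDk'def
  set W : ℕ → ℝ≥0∞ := fun n =>
    monoVal (lam n) (x n) (fun p => (A' k₀ p:ℤ)) ((a' k₀:ℤ)) with hWdef
  set LN : κ → ℝ≥0∞ := fun k =>
    L (fun p => (A k p:ℤ) - (A' k₀ p:ℤ)) ((a k:ℤ) - (a' k₀:ℤ)) with hLNdef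
  set LD : κ' → ℝ≥0∞ := fun k =>
    L (fun p => (A' k p:ℤ) - (A' k₀ p:ℤ)) ((a' k:ℤ) - (a' k₀:ℤ)) with hLDdef
  have hDk : ∀ k, Tendsto (Dk k) atTop (𝓝 (LN k)) :=
    fun k => hL _ _ (hmemM (A k) (a k) (hA k) (ha k))
  have hDk' : ∀ k, Tendsto (Dk' k) atTop (𝓝 (LD k)) :=
    fun k => hL _ _ (hmemM (A' k) (a' k) (hA' k) (ha' k))
  set N : ℕ → ℝ≥0∞ := fun n =>
    ∑ k, ENNReal.ofReal (C k * (1 - lam n) ^ (b k)) * Dk k n with hNdef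
  set D : ℕ → ℝ≥0∞ := fun n =>
    ∑ k, ENNReal.ofReal (C' k * (1 - lam n) ^ (b' k)) * Dk' k n with hDdef
  set S : ℝ≥0∞ := ∑ k, ENNReal.ofReal (C k) * LN k with hSdef
  set S' : ℝ≥0∞ := ∑ k, ENNReal.ofReal (C' k) * LD k with hS'def
  -- limits of coefficient factors
  have hcoef : ∀ (c : ℝ) (m : ℕ), Tendsto (fun n => ENNReal.ofReal (c * (1 - lam n) ^ m))
      atTop (𝓝 (ENNReal.ofReal c)) := by
    intro c m
    have hre : Tendsto (fun n => c * (1 - lam n) ^ m) atTop (𝓝 (c * (1 - 0) ^ m)) :=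
      tendsto_const_nhds.mul ((tendsto_const_nhds.sub hlam0).pow m)
    have := (ENNReal.continuous_ofReal.tendsto _).comp hre
    simpa [Function.comp_def] using this
  have hN : Tendsto N atTop (𝓝 S) := by
    refine tendsto_finset_sum _ fun k _ => ?_
    exact ENNReal.Tendsto.mul (hcoef (C k) (b k)) (Or.inr (hmax k)) (hDk k)
      (Or.inr ENNReal.ofReal_ne_top)
  have hD : Tendsto D atTop (𝓝 S') := by
    refine tendsto_finset_sum _ fun k _ => ?_
    exact ENNReal.Tendsto.mul (hcoef (C' k) (b' k)) (Or.inr (hmax' k)) (hDk' k)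
      (Or.inr ENNReal.ofReal_ne_top)
  -- finiteness and nonvanishing of the limits
  have hS_top : S ≠ ⊤ := by
    rw [hSdef]
    refine (ENNReal.sum_lt_top.mpr fun k _ => ?_).ne
    exact ENNReal.mul_lt_top ENNReal.ofReal_lt_top (hmax k).lt_top
  have hS'_top : S' ≠ ⊤ := by
    rw [hS'def]
    refine (ENNReal.sum_lt_top.mpr fun k _ => ?_).ne
    exact ENNReal.mul_lt_top ENNReal.ofReal_lt_top (hmax' k).lt_top
  have hLD1 : LD k₀ = 1 := by
    have hconst : ∀ n, monoVal (lam n) (x n)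
        (fun p => (A' k₀ p:ℤ) - (A' k₀ p:ℤ)) ((a' k₀:ℤ) - (a' k₀:ℤ)) = 1 := by
      intro n
      simp [monoVal, sub_self]
    have h1 : Tendsto (Dk' k₀) atTop (𝓝 1) := by
      rw [hDk'def]
      simp only [hconst]
      exact tendsto_const_nhds
    exact tendsto_nhds_unique (hDk' k₀) h1
  have hS'_0 : S' ≠ 0 := by
    have hterm : (0:ℝ≥0∞) < ENNReal.ofReal (C' k₀) * LD k₀ := by
      rw [hLD1, mul_one]
      exact ENNReal.ofReal_pos.mpr (hC' k₀)
    have hle : ENNReal.ofReal (C' k₀) * LD k₀ ≤ S' :=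
      Finset.single_le_sum (f := fun k => ENNReal.ofReal (C' k) * LD k)
        (fun k _ => zero_le) (Finset.mem_univ _)
    exact (lt_of_lt_of_le hterm hle).ne'
  -- limit of the ratio in ℝ≥0∞, then transfer to ℝ
  have hdiv : Tendsto (fun n => N n / D n) atTop (𝓝 (S / S')) :=
    ENNReal.Tendsto.div hN (Or.inr hS'_0) hD (Or.inl hS'_top)
  have hne : S / S' ≠ ⊤ := (ENNReal.div_lt_top hS_top hS'_0).ne
  have hT : Tendsto (fun n => (N n / D n).toReal) atTop (𝓝 ((S / S').toReal)) :=
    (ENNReal.tendsto_toReal hne).comp hdiv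
  refine hT.congr' ?_
  have hev : ∀ᶠ n in atTop, (∀ k, Dk k n ≠ ⊤) ∧ (∀ k, Dk' k n ≠ ⊤) := by
    refine Filter.Eventually.and ?_ ?_
    · exact eventually_all.2 fun k => (hDk k).eventually_ne (hmax k)
    · exact eventually_all.2 fun k => (hDk' k).eventually_ne (hmax' k)
  filter_upwards [hev] with n hn
  obtain ⟨hn1, hn2⟩ := hn
  have h0n := (hlam n).1
  have h1n := (hlam n).2
  have hQnn : 0 ≤ ∑ k, rmono (lam n) (x n) (C k) (b k) (a k) (A k) :=
    Finset.sum_nonneg fun k _ =>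
      rmono_nonneg _ _ h0n.le h1n (hx n) _ (hC k).le _ _ _
  have hQ'pos := hpos n
  have hQ : ENNReal.ofReal (∑ k, rmono (lam n) (x n) (C k) (b k) (a k) (A k))
      = N n * W n := by
    rw [ENNReal.ofReal_sum_of_nonneg (fun k _ =>
      rmono_nonneg _ _ h0n.le h1n (hx n) _ (hC k).le _ _ _)]
    rw [hNdef, Finset.sum_mul]
    refine Finset.sum_congr rfl fun k _ => ?_
    rw [key_factor (lam n) (x n) h0n h1n (hx n) (C k) (hC k).le (b k) (a k) (A k)
      (hA k) (a' k₀) (A' k₀) (hA' k₀) (hn1 k)]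
    ring
  have hQ' : ENNReal.ofReal (∑ k, rmono (lam n) (x n) (C' k) (b' k) (a' k) (A' k))
      = D n * W n := by
    rw [ENNReal.ofReal_sum_of_nonneg (fun k _ =>
      rmono_nonneg _ _ h0n.le h1n (hx n) _ (hC' k).le _ _ _)]
    rw [hDdef, Finset.sum_mul]
    refine Finset.sum_congr rfl fun k _ => ?_
    rw [key_factor (lam n) (x n) h0n h1n (hx n) (C' k) (hC' k).le (b' k) (a' k) (A' k)
      (hA' k) (a' k₀) (A' k₀) (hA' k₀) (hn2 k)]
    ring
  have hWt : W n ≠ ⊤ := natMono_ne_top _ _ _ _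
  have hQ'ne : ENNReal.ofReal (∑ k, rmono (lam n) (x n) (C' k) (b' k) (a' k) (A' k)) ≠ 0 :=
    fun h => absurd (ENNReal.ofReal_eq_zero.mp h) hQ'pos.not_ge
  have hW0 : W n ≠ 0 := by
    intro h
    apply hQ'ne
    rw [hQ', h, mul_zero]
  rw [← ENNReal.mul_div_mul_right (N n) (D n) hW0 hWt, ← hQ, ← hQ',
    ← ENNReal.ofReal_div_of_pos hQ'pos, ENNReal.toReal_ofReal (div_nonneg hQnn hQ'pos.le)]

end aux

/-- Ratios of positive combinations of monomials along a regular sequence: if some monomial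
of the denominator is maximal (its ratio-limit with every other monomial is finite, a
condition expressed through the limit vector `L`), then `P_n / P'_n` converges to a
nonnegative real limit which depends only on the coefficients `C` and on `L` (hence is the
same for any other regular sequence with the same limit vector `L`). -/
theorem ratio_of_monomial_sums_converges
    {Ω I : Type*} [Fintype Ω] [Fintype I] [Nonempty I]
    {κ κ' : Type*} [Fintype κ] [Fintype κ']
    -- the two regular sequences, with the same limit vector L
    (lam lam' : ℕ → ℝ) (x x' : ℕ → Ω → I → ℝ)
    (hlam : ∀ n, lam n ∈ Set.Ioc (0:ℝ) 1) (hlam' : ∀ n, lam' n ∈ Set.Ioc (0:ℝ) 1)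
    (hx : ∀ n ω, x n ω ∈ stdSimplex ℝ I) (hx' : ∀ n ω, x' n ω ∈ stdSimplex ℝ I)
    (hreg : IsRegularSeq lam x) (hreg' : IsRegularSeq lam' x')
    (L : (Ω × I → ℤ) → ℤ → ℝ≥0∞)
    (hL : ∀ A a, memM Ω I A a →
      Tendsto (fun n => monoVal (lam n) (x n) A a) atTop (𝓝 (L A a)))
    (hL' : ∀ A a, memM Ω I A a →
      Tendsto (fun n => monoVal (lam' n) (x' n) A a) atTop (𝓝 (L A a)))
    -- data of the numerator P and denominator P'
    (C : κ → ℝ) (b a : κ → ℕ) (A : κ → Ω × I → ℕ)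
    (C' : κ' → ℝ) (b' a' : κ' → ℕ) (A' : κ' → Ω × I → ℕ)
    (hC : ∀ k, 0 < C k) (hb : ∀ k, b k ≤ Fintype.card Ω) (ha : ∀ k, a k ≤ Fintype.card Ω)
    (hA : ∀ k p, A k p ≤ 1)
    (hC' : ∀ k, 0 < C' k) (hb' : ∀ k, b' k ≤ Fintype.card Ω)
    (ha' : ∀ k, a' k ≤ Fintype.card Ω) (hA' : ∀ k p, A' k p ≤ 1)
    -- positivity of the denominator along both sequences
    (hpos : ∀ n, 0 < ∑ k, rmono (lam n) (x n) (C' k) (b' k) (a' k) (A' k))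
    (hpos' : ∀ n, 0 < ∑ k, rmono (lam' n) (x' n) (C' k) (b' k) (a' k) (A' k))
    -- a maximal monomial of the denominator, w.r.t. the order induced by L
    (k₀ : κ')
    (hmax : ∀ k : κ,
      L (fun p => (A k p : ℤ) - (A' k₀ p : ℤ)) ((a k : ℤ) - (a' k₀ : ℤ)) ≠ ⊤)
    (hmax' : ∀ k : κ',
      L (fun p => (A' k p : ℤ) - (A' k₀ p : ℤ)) ((a' k : ℤ) - (a' k₀ : ℤ)) ≠ ⊤) :
    ∃ r : ℝ, 0 ≤ r ∧
      Tendsto (fun n =>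
        (∑ k, rmono (lam n) (x n) (C k) (b k) (a k) (A k)) /
        (∑ k, rmono (lam n) (x n) (C' k) (b' k) (a' k) (A' k))) atTop (𝓝 r) ∧
      Tendsto (fun n =>
        (∑ k, rmono (lam' n) (x' n) (C k) (b k) (a k) (A k)) /
        (∑ k, rmono (lam' n) (x' n) (C' k) (b' k) (a' k) (A' k))) atTop (𝓝 r) := by
  refine ⟨((∑ k, ENNReal.ofReal (C k) *
              L (fun p => (A k p:ℤ) - (A' k₀ p:ℤ)) ((a k:ℤ) - (a' k₀:ℤ))) /
           (∑ k, ENNReal.ofReal (C' k) *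
              L (fun p => (A' k p:ℤ) - (A' k₀ p:ℤ)) ((a' k:ℤ) - (a' k₀:ℤ)))).toReal,
    ENNReal.toReal_nonneg, ?_, ?_⟩
  · exact ratio_aux lam x hlam hreg.1 (fun n ω i => (hx n ω).1 i) L hL
      C b a A C' b' a' A' hC ha hA hC' ha' hA' hpos k₀ hmax hmax'
  · exact ratio_aux lam' x' hlam' hreg'.1 (fun n ω i => (hx' n ω).1 i) L hL'
      C b a A C' b' a' A' hC ha hA hC' ha' hA' hpos' k₀ hmax hmax'
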